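/- arXiv:1902.09005 — 2 statements merged into one kernel-verified Lean document; each statement's English description precedes it below -/
import Mathlib

section
/- Let (Z_{k,n})_{k,n∈ℕ} be a family of real-valued random variables with CDFs F_{k,n} satisfying assumptions AS1 and AS2. Then the limit lim_{n→∞} ( p-liminf_{k→∞} Z_{k,n} ) exists and equals sup{α ∈ ℝ : lim_{n→∞} limsup_{k→∞} F_{k,n}(α) = 0}. -/
open MeasureTheory Filter Topology

open Set

/-- The CDF of a real random variable `Z` under the measure `μ`, evaluated at `α`,
using the convention `F(α) = P(Z < α)`. -/
noncomputable def cdfLt {Ω : Type*} [MeasurableSpace Ω] (μ : Measure Ω) (Z : Ω → ℝ)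
    (α : ℝ) : ℝ :=
  (μ {ω | Z ω < α}).toReal

/-- The limit-inferior in probability of a sequence of real random variables:
`p-liminf_{k→∞} Z_k = sup {α ∈ ℝ | lim_{k→∞} P(Z_k < α) = 0}`. -/
noncomputable def pliminf {Ω : Type*} [MeasurableSpace Ω] (μ : Measure Ω)
    (Z : ℕ → Ω → ℝ) : ℝ :=
  sSup {α : ℝ | Tendsto (fun k => cdfLt μ (Z k) α) atTop (nhds 0)}

private lemma bddU {u : ℕ → ℝ} (h : ∀ k, u k ≤ 1) :
    IsBoundedUnder (· ≤ ·) (atTop : Filter ℕ) u := isBoundedUnder_of ⟨1, h⟩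
private lemma bddL {u : ℕ → ℝ} (h : ∀ k, 0 ≤ u k) :
    IsBoundedUnder (· ≥ ·) (atTop : Filter ℕ) u := isBoundedUnder_of ⟨0, fun k => h k⟩

private lemma cdfLt_nonneg {Ω : Type*} [MeasurableSpace Ω] (μ : Measure Ω) (Zf : Ω → ℝ)
    (α : ℝ) : 0 ≤ cdfLt μ Zf α := ENNReal.toReal_nonneg

private lemma cdfLt_le_one {Ω : Type*} [MeasurableSpace Ω] (μ : Measure Ω)
    [IsProbabilityMeasure μ] (Zf : Ω → ℝ) (α : ℝ) : cdfLt μ Zf α ≤ 1 := by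
  have h : μ {ω | Zf ω < α} ≤ 1 := prob_le_one
  calc (μ {ω | Zf ω < α}).toReal ≤ (1 : ENNReal).toReal :=
        ENNReal.toReal_mono ENNReal.one_ne_top h
    _ = 1 := by simp

private lemma cdfLt_mono {Ω : Type*} [MeasurableSpace Ω] (μ : Measure Ω)
    [IsProbabilityMeasure μ] (Zf : Ω → ℝ) : Monotone (cdfLt μ Zf) :=
  fun a b hab => ENNReal.toReal_mono (measure_ne_top μ _)
    (measure_mono fun ω hω => lt_of_lt_of_le hω hab)

private lemma subseq_tendsto_limsup {u : ℕ → ℝ} (h0 : ∀ k, 0 ≤ u k) (h1 : ∀ k, u k ≤ 1) :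
    ∃ φ : ℕ → ℕ, StrictMono φ ∧
      Tendsto (fun l => u (φ l)) atTop (𝓝 (limsup u atTop)) := by
  set L := limsup u atTop with hL
  have hfr : ∀ n : ℕ, ∃ᶠ k in atTop, |u k - L| < 1 / (n + 1) := by
    intro n
    have hpos : (0:ℝ) < 1 / (n + 1) := by positivity
    have h₁ : ∃ᶠ k in atTop, L - 1 / (n + 1) < u k :=
      frequently_lt_of_lt_limsup ((bddL h0).isCoboundedUnder_le) (by linarith)
    have h₂ : ∀ᶠ k in atTop, u k < L + 1 / (n + 1) :=
      eventually_lt_of_limsup_lt (by linarith) (bddU h1)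
    exact (h₁.and_eventually h₂).mono fun k ⟨hk1, hk2⟩ => abs_lt.2 ⟨by linarith, by linarith⟩
  obtain ⟨φ, hφ, hP⟩ := extraction_forall_of_frequently hfr
  refine ⟨φ, hφ, ?_⟩
  rw [tendsto_iff_dist_tendsto_zero]
  simp only [Real.dist_eq]
  exact squeeze_zero (fun n => abs_nonneg _) (fun n => (hP n).le)
    tendsto_one_div_add_atTop_nhds_zero_nat

private lemma extract_countable (S : Set ℝ) (hS : S.Countable) (f : ℕ → ℝ → ℝ)
    (hbd : ∀ k x, f k x ∈ Icc (0:ℝ) 1) :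
    ∃ φ : ℕ → ℕ, StrictMono φ ∧
      ∀ x ∈ S, ∃ c : ℝ, Tendsto (fun l => f (φ l) x) atTop (𝓝 c) := by
  haveI := hS.to_subtype
  set u : ℕ → (S → Icc (0:ℝ) 1) := fun k x => ⟨f k x, hbd k x⟩ with hu
  obtain ⟨a, φ, hφ, hconv⟩ := SeqCompactSpace.tendsto_subseq u
  refine ⟨φ, hφ, fun x hx => ⟨(a ⟨x, hx⟩ : ℝ), ?_⟩⟩
  have := tendsto_pi_nhds.1 hconv ⟨x, hx⟩
  exact (continuous_subtype_val.tendsto _).comp this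

private lemma helly (f : ℕ → ℝ → ℝ) (hmono : ∀ k, Monotone (f k))
    (hbd : ∀ k x, f k x ∈ Icc (0:ℝ) 1) :
    ∃ φ : ℕ → ℕ, StrictMono φ ∧ ∃ H : ℝ → ℝ,
      ∀ x, Tendsto (fun l => f (φ l) x) atTop (𝓝 (H x)) := by
  classical
  obtain ⟨φ₁, hφ₁, h₁⟩ := extract_countable (Set.range ((↑) : ℚ → ℝ))
    (Set.countable_range _) f hbd
  have hg : ∀ q : ℚ, ∃ c : ℝ, Tendsto (fun l => f (φ₁ l) (q : ℝ)) atTop (𝓝 c) :=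
    fun q => h₁ _ ⟨q, rfl⟩
  choose g hgt using hg
  have hg0 : ∀ q, 0 ≤ g q := fun q =>
    ge_of_tendsto (hgt q) (Eventually.of_forall fun l => (hbd _ _).1)
  have hgm : ∀ q q' : ℚ, (q:ℝ) ≤ (q':ℝ) → g q ≤ g q' := fun q q' hqq =>
    le_of_tendsto_of_tendsto' (hgt q) (hgt q') fun l => hmono _ hqq
  set G : ℝ → ℝ := fun x => sInf (g '' {q : ℚ | x < (q:ℝ)}) with hG
  have hne : ∀ x : ℝ, (g '' {q : ℚ | x < (q:ℝ)}).Nonempty := by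
    intro x
    obtain ⟨q, hq⟩ := exists_rat_gt x
    exact ⟨g q, ⟨q, hq, rfl⟩⟩
  have hbdd : ∀ x : ℝ, BddBelow (g '' {q : ℚ | x < (q:ℝ)}) :=
    fun x => ⟨0, fun y ⟨q, _, hqy⟩ => hqy ▸ hg0 q⟩
  have hGle : ∀ (x : ℝ) (q : ℚ), x < (q:ℝ) → G x ≤ g q :=
    fun x q hq => csInf_le (hbdd x) ⟨q, hq, rfl⟩
  have hGmono : Monotone G := by
    intro x y hxy
    exact le_csInf (hne y) fun b ⟨q, hq, hqb⟩ => hqb ▸ hGle x q (lt_of_le_of_lt hxy hq)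
  set D : Set ℝ := Set.range ((↑) : ℚ → ℝ) ∪ {x | ¬ContinuousAt G x} with hD
  have hDc : D.Countable := (Set.countable_range _).union hGmono.countable_not_continuousAt
  obtain ⟨φ₂, hφ₂, h₂⟩ := extract_countable D hDc (fun l => f (φ₁ l)) (fun l x => hbd _ _)
  set φ : ℕ → ℕ := φ₁ ∘ φ₂ with hφdef
  have hφ : StrictMono φ := hφ₁.comp hφ₂
  have key : ∀ x : ℝ, ∃ c : ℝ, Tendsto (fun l => f (φ l) x) atTop (𝓝 c) := by
    intro x
    by_cases hx : x ∈ D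
    · exact h₂ x hx
    · have hcont : ContinuousAt G x := by
        by_contra hc
        exact hx (Or.inr hc)
      set w : ℕ → ℝ := fun l => f (φ l) x with hw
      have hw0 : ∀ l, 0 ≤ w l := fun l => (hbd _ _).1
      have hw1 : ∀ l, w l ≤ 1 := fun l => (hbd _ _).2
      have hgt' : ∀ q : ℚ, Tendsto (fun l => f (φ l) (q:ℝ)) atTop (𝓝 (g q)) :=
        fun q => (hgt q).comp hφ₂.tendsto_atTop
      have hup : limsup w atTop ≤ G x := by
        refine le_csInf (hne x) ?_
        rintro y ⟨q, hq, rfl⟩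
        have hle : ∀ l, w l ≤ f (φ l) (q:ℝ) := fun l => hmono _ hq.le
        calc limsup w atTop ≤ limsup (fun l => f (φ l) (q:ℝ)) atTop :=
              limsup_le_limsup (Eventually.of_forall hle)
                ((bddL hw0).isCoboundedUnder_le)
                (bddU fun l => (hbd _ _).2)
          _ = g q := (hgt' q).limsup_eq
      have hlo : G x ≤ liminf w atTop := by
        have hev : ∀ y ∈ Iio x, G y ≤ liminf w atTop := by
          intro y hy
          obtain ⟨q, hyq, hqx⟩ := exists_rat_btwn (show y < x from hy)
          have h1 : G y ≤ g q := hGle y q hyq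
          have h2 : g q ≤ liminf w atTop := by
            have hle : ∀ l, f (φ l) (q:ℝ) ≤ w l := fun l => hmono _ hqx.le
            calc g q = liminf (fun l => f (φ l) (q:ℝ)) atTop := ((hgt' q).liminf_eq).symm
              _ ≤ liminf w atTop :=
                liminf_le_liminf (Eventually.of_forall hle)
                  (bddL fun l => (hbd _ _).1)
                  ((bddU hw1).isCoboundedUnder_ge)
          exact h1.trans h2
        have htd : Tendsto G (𝓝[<] x) (𝓝 (G x)) :=
          (hcont.tendsto).mono_left nhdsWithin_le_nhds
        exact le_of_tendsto htd (eventually_mem_nhdsWithin.mono hev)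
      have hlim_le : liminf w atTop ≤ limsup w atTop :=
        liminf_le_limsup (bddU hw1) (bddL hw0)
      have heq1 : liminf w atTop = G x := le_antisymm (hlim_le.trans hup) hlo
      have heq2 : limsup w atTop = G x := le_antisymm hup (hlo.trans hlim_le)
      exact ⟨G x, tendsto_of_liminf_eq_limsup heq1 heq2 (bddU hw1) (bddL hw0)⟩
  choose H hH using key
  exact ⟨φ, hφ, H, hH⟩

private lemma limsup_le_limsup_add {η : ℝ} {u v : ℕ → ℝ} (h : ∀ k, u k ≤ v k + η)
    (hu0 : ∀ k, 0 ≤ u k) (hv0 : ∀ k, 0 ≤ v k) (hv1 : ∀ k, v k ≤ 1) :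
    limsup u atTop ≤ limsup v atTop + η := by
  calc limsup u atTop ≤ limsup (fun k => v k + η) atTop :=
        limsup_le_limsup (Eventually.of_forall h)
          ((bddL hu0).isCoboundedUnder_le)
          (isBoundedUnder_of ⟨1 + η, fun k => add_le_add_left (hv1 k) η⟩)
    _ = limsup v atTop + η :=
        limsup_add_const atTop v η (bddU hv1) ((bddL hv0).isCoboundedUnder_le)

/-- If the family `(Z_{k,n})` with CDFs `F_{k,n}` satisfies AS1 and AS2
(with limiting random variables `Z_k`), then the limit `lim_{n→∞} (p-liminf_{k→∞} Z_{k,n})`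
exists and equals `sup {α ∈ ℝ | lim_{n→∞} limsup_{k→∞} F_{k,n}(α) = 0}`. -/
theorem stmt4 {Ω : Type*} [MeasurableSpace Ω] (μ : Measure Ω) [IsProbabilityMeasure μ]
    (Z : ℕ → ℕ → Ω → ℝ) (Zlim : ℕ → Ω → ℝ)
    (hAS1 : ∀ n : ℕ, ∀ φ : ℕ → ℕ, StrictMono φ → ∀ G : ℝ → ℝ,
      (∀ α : ℝ, Tendsto (fun l => cdfLt μ (Z (φ l) n) α) atTop (nhds (G α))) →
      ∃ c : ℝ, ∀ α : ℝ, G α = if α ≤ c then 0 else 1)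
    (hAS2 : ∀ η : ℝ, 0 < η → ∃ n₀ : ℕ, ∀ n > n₀, ∀ k : ℕ, ∀ α : ℝ,
      |cdfLt μ (Z k n) α - cdfLt μ (Zlim k) α| < η) :
    Tendsto (fun n => pliminf μ (fun k => Z k n)) atTop
      (nhds (sSup {α : ℝ |
        Tendsto (fun n => Filter.limsup (fun k => cdfLt μ (Z k n) α) atTop) atTop
          (nhds 0)})) := by
  classical
  set M : ℕ → ℝ → ℝ := fun n α => limsup (fun k => cdfLt μ (Z k n) α) atTop with hM
  set Minf : ℝ → ℝ := fun α => limsup (fun k => cdfLt μ (Zlim k) α) atTop with hMinf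
  -- Step A: M n α ∈ {0, 1}
  have stepA : ∀ n α, M n α = 0 ∨ M n α = 1 := by
    intro n α
    set u : ℕ → ℝ := fun k => cdfLt μ (Z k n) α with hu
    obtain ⟨ψ, hψ, hψt⟩ := subseq_tendsto_limsup
      (u := u) (fun k => cdfLt_nonneg μ _ α) (fun k => cdfLt_le_one μ _ α)
    obtain ⟨φ₂, hφ₂, H, hH⟩ := helly (fun l => cdfLt μ (Z (ψ l) n))
      (fun l => cdfLt_mono μ _) (fun l x => ⟨cdfLt_nonneg μ _ x, cdfLt_le_one μ _ x⟩)
    obtain ⟨c, hc⟩ := hAS1 n (ψ ∘ φ₂) (hψ.comp hφ₂) H (fun β => hH β)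
    have h1' : Tendsto (fun l => u (ψ (φ₂ l))) atTop (𝓝 (M n α)) :=
      hψt.comp hφ₂.tendsto_atTop
    have h2' : Tendsto (fun l => u (ψ (φ₂ l))) atTop (𝓝 (H α)) := hH α
    have hMH : M n α = H α := tendsto_nhds_unique h1' h2'
    rw [hMH, hc α]
    split
    · exact Or.inl rfl
    · exact Or.inr rfl
  -- Step B: uniform closeness of M n to Minf
  have stepB : ∀ η : ℝ, 0 < η → ∃ n₀ : ℕ, ∀ n > n₀, ∀ α, |M n α - Minf α| ≤ η := by
    intro η hη
    obtain ⟨n₀, hn₀⟩ := hAS2 η hη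
    refine ⟨n₀, fun n hn α => abs_le.2 ⟨?_, ?_⟩⟩
    · have h := limsup_le_limsup_add (η := η)
        (u := fun k => cdfLt μ (Zlim k) α) (v := fun k => cdfLt μ (Z k n) α)
        (fun k => by have := hn₀ n hn k α; rw [abs_lt] at this; linarith)
        (fun k => cdfLt_nonneg μ _ α) (fun k => cdfLt_nonneg μ _ α)
        (fun k => cdfLt_le_one μ _ α)
      simp only [hM, hMinf] at *
      linarith
    · have h := limsup_le_limsup_add (η := η)
        (u := fun k => cdfLt μ (Z k n) α) (v := fun k => cdfLt μ (Zlim k) α)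
        (fun k => by have := hn₀ n hn k α; rw [abs_lt] at this; linarith)
        (fun k => cdfLt_nonneg μ _ α) (fun k => cdfLt_nonneg μ _ α)
        (fun k => cdfLt_le_one μ _ α)
      simp only [hM, hMinf] at *
      linarith
  obtain ⟨n₀, hn₀⟩ := stepB (1/3) (by norm_num)
  -- Step C: M is eventually constant in n
  have stepC : ∀ n > n₀, ∀ m > n₀, ∀ α, M n α = M m α := by
    intro n hn m hm α
    have h1 := hn₀ n hn α
    have h2 := hn₀ m hm α
    rw [abs_le] at h1 h2
    rcases stepA n α with ha | ha <;> rcases stepA m α with hb | hb <;>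
        rw [ha] at h1 ⊢ <;> rw [hb] at h2 ⊢
    · exfalso; linarith [h1.1, h1.2, h2.1, h2.2]
    · exfalso; linarith [h1.1, h1.2, h2.1, h2.2]
  set N : ℕ := n₀ + 1 with hN
  have hNgt : N > n₀ := Nat.lt_succ_self n₀
  set v : ℝ → ℝ := fun α => M N α with hv
  -- characterization of S_n
  have hS : ∀ n > n₀, ∀ α,
      (Tendsto (fun k => cdfLt μ (Z k n) α) atTop (𝓝 0) ↔ v α = 0) := by
    intro n hn α
    constructor
    · intro h
      have : M n α = 0 := h.limsup_eq
      exact (stepC N hNgt n hn α).trans this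
    · intro h
      have hMn : M n α = 0 := by rw [stepC n hn N hNgt α]; exact h
      have h0 : ∀ k, 0 ≤ cdfLt μ (Z k n) α := fun k => cdfLt_nonneg μ _ α
      have h1 : ∀ k, cdfLt μ (Z k n) α ≤ 1 := fun k => cdfLt_le_one μ _ α
      have hlil : liminf (fun k => cdfLt μ (Z k n) α) atTop ≤ 0 := by
        have := liminf_le_limsup (f := atTop) (u := fun k => cdfLt μ (Z k n) α)
          (bddU h1) (bddL h0)
        rw [hM] at hMn
        simpa [hMn] using this
      have hlig : (0:ℝ) ≤ liminf (fun k => cdfLt μ (Z k n) α) atTop :=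
        le_liminf_of_le ((bddU h1).isCoboundedUnder_ge) (Eventually.of_forall h0)
      exact tendsto_of_liminf_eq_limsup (le_antisymm hlil hlig) hMn (bddU h1) (bddL h0)
  -- characterization of T
  have hT : {α : ℝ | Tendsto (fun n => M n α) atTop (𝓝 0)} = {α : ℝ | v α = 0} := by
    ext α
    have hev : (fun n : ℕ => v α) =ᶠ[atTop] (fun n => M n α) :=
      (eventually_gt_atTop n₀).mono fun n hn => (stepC n hn N hNgt α).symm
    simp only [Set.mem_setOf_eq]
    constructor
    · intro h
      exact tendsto_nhds_unique (tendsto_const_nhds.congr' hev) h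
    · intro h
      refine tendsto_const_nhds.congr' ?_
      exact hev.mono fun n hn => by rw [← hn, h]
  -- conclusion
  have hpl : ∀ n > n₀, pliminf μ (fun k => Z k n) = sSup {α : ℝ | v α = 0} := by
    intro n hn
    unfold pliminf
    congr 1
    ext α
    exact hS n hn α
  have htarget : sSup {α : ℝ |
      Tendsto (fun n => Filter.limsup (fun k => cdfLt μ (Z k n) α) atTop) atTop (𝓝 0)}
      = sSup {α : ℝ | v α = 0} := by
    rw [← hT]
  rw [htarget]
  refine Tendsto.congr' ?_ tendsto_const_nhds
  exact (eventually_gt_atTop n₀).mono fun n hn => (hpl n hn).symm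
end

section
/- Fix n ∈ ℕ and let F*_{X_n} be the capacity-achieving input distribution of the memoryless channel Y_n[i] = X[i] + W_n[i] with additive wide-sense cyclostationary Gaussian noise W_n[i] (of period N_n) under the average power constraint P. Then every subsequence (in the blocklength k) of the mutual information density rates Z'_{k,n}(F*_{X_n}) = (1/k)·log( p_{Y_n^{(k)}|X_n^{(k)}}(Y_n^{(k)}|X_n^{(k)}) / p_{Y_n^{(k)}}(Y_n^{(k)}) ) converges in distribution as k→∞ to a finite deterministic scalar. -/
open MeasureTheory ProbabilityTheory Filter Topology
open scoped NNReal ENNReal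

/-- The scalar zero-mean Gaussian density with variance `v`. -/
noncomputable def gpdf (v x : ℝ) : ℝ :=
  (Real.sqrt (2 * Real.pi * v))⁻¹ * Real.exp (-(x ^ 2) / (2 * v))

/-- The mutual information density rate
`Z'_k = (1/k) log₂ ( p_{Y^{(k)}|X^{(k)}}(y|x) / p_{Y^{(k)}}(y) )` of the memoryless additive
Gaussian noise channel with a memoryless zero-mean Gaussian input, evaluated at the input
block `x` and the noise block `w` (so `y = x + w`): the input has variances `sX`, the noise has
variances `sW`, and hence `Y[i]` has variance `sX i + sW i`. -/
noncomputable def infoDensRate (sX sW : ℕ → ℝ) (k : ℕ) (x w : Fin k → ℝ) : ℝ :=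
  (1 / (k : ℝ)) * ∑ i : Fin k,
    Real.logb 2 (gpdf (sW ((i : ℕ) + 1)) (w i) /
      gpdf (sX ((i : ℕ) + 1) + sW ((i : ℕ) + 1)) (x i + w i))

/-- The joint law of `(X^{(k)}, W^{(k)})`: independent zero-mean Gaussian input entries with
variances `sX` and independent zero-mean Gaussian noise entries with variances `sW`. -/
noncomputable def inputNoiseMeasure (sX sW : ℕ → ℝ) (k : ℕ) :
    Measure ((Fin k → ℝ) × (Fin k → ℝ)) :=
  (Measure.pi fun i : Fin k => gaussianReal 0 (sX ((i : ℕ) + 1)).toNNReal).prod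
    (Measure.pi fun i : Fin k => gaussianReal 0 (sW ((i : ℕ) + 1)).toNNReal)

/-- The CDF of the mutual information density rate `Z'_k` (evaluated with the convention
`F(α) = P(Z'_k < α)`). -/
noncomputable def infoDensCDF (sX sW : ℕ → ℝ) (k : ℕ) (α : ℝ) : ℝ :=
  ((inputNoiseMeasure sX sW k)
    {xw | infoDensRate sX sW k xw.1 xw.2 < α}).toReal

set_option maxHeartbeats 1000000

section AuxiliaryLemmas
open Finset

/-- per-letter information density. -/
noncomputable def Tfun (a b : ℝ) : ℝ × ℝ → ℝ :=
  fun q => Real.logb 2 (gpdf b q.2 / gpdf (a + b) (q.1 + q.2))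

/-- joint law of one input letter and one noise letter. -/
noncomputable def m2meas (a b : ℝ) : Measure (ℝ × ℝ) :=
  (gaussianReal 0 a.toNNReal).prod (gaussianReal 0 b.toNNReal)

instance m2meas_prob (a b : ℝ) : IsProbabilityMeasure (m2meas a b) := by
  unfold m2meas; infer_instance

noncomputable def muT (a b : ℝ) : ℝ := ∫ q, Tfun a b q ∂(m2meas a b)

noncomputable def varT (a b : ℝ) : ℝ := variance (Tfun a b) (m2meas a b)

lemma measurable_T (a b : ℝ) : Measurable (Tfun a b) := by
  have hc : Continuous (gpdf b) := by unfold gpdf; fun_prop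
  have hc2 : Continuous (gpdf (a + b)) := by unfold gpdf; fun_prop
  have hr : Measurable (fun q : ℝ × ℝ => gpdf b q.2 / gpdf (a + b) (q.1 + q.2)) :=
    (hc.comp continuous_snd).measurable.div
      ((hc2.comp (continuous_fst.add continuous_snd))).measurable
  exact (Real.measurable_log.comp hr).div_const _

lemma memLp_sq_gaussian (v : ℝ≥0) : MemLp (fun y : ℝ => y ^ 2) 2 (gaussianReal 0 v) := by
  by_cases hv : v = 0
  · subst hv
    rw [gaussianReal_zero_var]
    refine (memLp_const ((0:ℝ) ^ 2)).ae_eq ?_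
    rw [ae_dirac_eq]
    exact Filter.eventually_pure.mpr (by norm_num)
  · rw [gaussianReal_of_var_ne_zero 0 hv]
    refine (memLp_two_iff_integrable_sq (Continuous.aestronglyMeasurable (by fun_prop))).2 ?_
    rw [integrable_withDensity_iff (measurable_gaussianPDF 0 v)
      (ae_of_all _ fun x => ENNReal.ofReal_lt_top)]
    have hv0 : (0:ℝ) < v := lt_of_le_of_ne v.2 (by exact_mod_cast (Ne.symm hv))
    have h : Integrable (fun y : ℝ => y ^ (4:ℝ) * Real.exp (-(1/(2*(v:ℝ))) * y ^ 2)) :=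
      integrable_rpow_mul_exp_neg_mul_sq (by positivity) (by norm_num)
    refine ((h.const_mul ((Real.sqrt (2*Real.pi*(v:ℝ)))⁻¹)).congr ?_)
    refine ae_of_all _ fun y => ?_
    show (Real.sqrt (2*Real.pi*(v:ℝ)))⁻¹ * (y ^ (4:ℝ) * Real.exp (-(1/(2*(v:ℝ))) * y ^ 2))
      = (y ^ 2) ^ 2 * (gaussianPDF 0 v y).toReal
    rw [show (gaussianPDF 0 v y).toReal = gaussianPDFReal 0 v y from by
      simp [gaussianPDF, ENNReal.toReal_ofReal (gaussianPDFReal_nonneg 0 v y)],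
      gaussianPDFReal]
    have h4 : y ^ (4:ℝ) = y ^ (4:ℕ) := by
      rw [show ((4:ℝ) = ((4:ℕ):ℝ)) by norm_num, Real.rpow_natCast]
    have harg : -(1/(2*(v:ℝ))) * y ^ 2 = -(y - 0) ^ 2 / (2*(v:ℝ)) := by
      field_simp
      ring
    rw [h4, harg]
    ring

lemma gpdf_pos {v : ℝ} (hv : 0 < v) (x : ℝ) : 0 < gpdf v x := by
  unfold gpdf
  have h2 : (0:ℝ) < 2 * Real.pi * v := by positivity
  positivity

lemma logb_gpdf_div {a b : ℝ} (ha : 0 ≤ a) (hb : 0 < b) (x w : ℝ) :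
    Real.logb 2 (gpdf b w / gpdf (a+b) (x+w)) =
      (Real.log (Real.sqrt (2*Real.pi*(a+b))) - Real.log (Real.sqrt (2*Real.pi*b))
        - w^2/(2*b) + (x+w)^2/(2*(a+b))) / Real.log 2 := by
  have hab : 0 < a + b := by linarith
  have hsb : 0 < Real.sqrt (2*Real.pi*b) := Real.sqrt_pos.2 (by positivity)
  have hsab : 0 < Real.sqrt (2*Real.pi*(a+b)) := Real.sqrt_pos.2 (by positivity)
  have hgb : gpdf b w ≠ 0 := (gpdf_pos hb w).ne'
  have hgab : gpdf (a+b) (x+w) ≠ 0 := (gpdf_pos hab (x+w)).ne'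
  rw [Real.logb, Real.log_div hgb hgab]
  unfold gpdf
  rw [Real.log_mul (by positivity) (Real.exp_ne_zero _),
    Real.log_mul (by positivity) (Real.exp_ne_zero _),
    Real.log_inv, Real.log_inv, Real.log_exp, Real.log_exp]
  ring

lemma memLp_T {a b : ℝ} (ha : 0 ≤ a) (hb : 0 < b) :
    MemLp (Tfun a b) 2 (m2meas a b) := by
  set μ := gaussianReal 0 a.toNNReal
  set ν := gaussianReal 0 b.toNNReal
  have hab : 0 < a + b := by linarith
  have h1 : MemLp (fun q : ℝ × ℝ => q.1 ^ 2) 2 (μ.prod ν) := by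
    have heq : (fun q : ℝ × ℝ => q.1 ^ 2) = (fun y : ℝ => y ^ 2) ∘ Prod.fst := rfl
    rw [heq, ← memLp_map_measure_iff (Continuous.aestronglyMeasurable (by fun_prop))
      measurable_fst.aemeasurable, Measure.map_fst_prod]
    simp only [measure_univ, one_smul]
    exact memLp_sq_gaussian _
  have h2 : MemLp (fun q : ℝ × ℝ => q.2 ^ 2) 2 (μ.prod ν) := by
    have heq : (fun q : ℝ × ℝ => q.2 ^ 2) = (fun y : ℝ => y ^ 2) ∘ Prod.snd := rfl
    rw [heq, ← memLp_map_measure_iff (Continuous.aestronglyMeasurable (by fun_prop))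
      measurable_snd.aemeasurable, Measure.map_snd_prod]
    simp only [measure_univ, one_smul]
    exact memLp_sq_gaussian _
  have hsum : MemLp (fun q : ℝ × ℝ => (q.1 + q.2) ^ 2) 2 (μ.prod ν) := by
    refine MemLp.of_le ((h1.const_mul 2).add (h2.const_mul 2))
      (Continuous.aestronglyMeasurable (by fun_prop)) (ae_of_all _ fun q => ?_)
    simp only [Pi.add_apply, Real.norm_eq_abs]
    rw [abs_of_nonneg (by positivity : (0:ℝ) ≤ (q.1 + q.2) ^ 2),
      abs_of_nonneg (by positivity : (0:ℝ) ≤ 2 * q.1 ^ 2 + 2 * q.2 ^ 2)]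
    nlinarith [sq_nonneg (q.1 - q.2)]
  set L : ℝ := Real.log (Real.sqrt (2*Real.pi*(a+b))) - Real.log (Real.sqrt (2*Real.pi*b))
    with hL
  have hT := ((((memLp_const (μ := μ.prod ν) (p := 2) L).add
      (h2.const_mul (-(2*b)⁻¹))).add (hsum.const_mul ((2*(a+b))⁻¹))).const_mul
      ((Real.log 2)⁻¹))
  refine hT.ae_eq (ae_of_all _ fun q => ?_)
  show _ = Real.logb 2 (gpdf b q.2 / gpdf (a+b) (q.1+q.2))
  have hrep := logb_gpdf_div ha hb q.1 q.2
  simp only [Pi.add_apply]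
  rw [hrep, ← hL]
  ring

section PiLemmas
variable {ι : Type*} [Fintype ι] {α : Type*} [MeasurableSpace α]

lemma pi_biInter_eval (μs : ι → Measure α) [∀ i, IsProbabilityMeasure (μs i)]
    (S : Finset ι) (A : ι → Set α) :
    Measure.pi μs (⋂ i ∈ S, (fun ω : ι → α => ω i) ⁻¹' A i) = ∏ i ∈ S, μs i (A i) := by
  classical
  have hset : (⋂ i ∈ S, (fun ω : ι → α => ω i) ⁻¹' A i)
      = Set.pi Set.univ (fun j => if j ∈ S then A j else Set.univ) := by
    ext ω
    simp only [Set.mem_iInter, Set.mem_preimage, Set.mem_pi, Set.mem_univ, true_implies]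
    constructor
    · intro h j
      by_cases hj : j ∈ S
      · simpa [hj] using h j hj
      · simp [hj]
    · intro h i hi
      simpa [hi] using h i
  rw [hset, Measure.pi_pi]
  have : ∀ j : ι, μs j (if j ∈ S then A j else Set.univ)
      = if j ∈ S then μs j (A j) else 1 := by
    intro j; by_cases hj : j ∈ S <;> simp [hj]
  rw [Finset.prod_congr rfl fun j _ => this j, Finset.prod_ite_mem, Finset.univ_inter]

lemma pi_map_eval (μs : ι → Measure α) [∀ i, IsProbabilityMeasure (μs i)] (i : ι) :
    (Measure.pi μs).map (fun ω : ι → α => ω i) = μs i := by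
  ext s hs
  rw [Measure.map_apply (measurable_pi_apply i) hs]
  have := pi_biInter_eval μs {i} (fun _ => s)
  simpa using this

lemma iIndepFun_eval (μs : ι → Measure α) [∀ i, IsProbabilityMeasure (μs i)] :
    iIndepFun (fun (i : ι) (ω : ι → α) => ω i) (Measure.pi μs) := by
  rw [iIndepFun_iff_measure_inter_preimage_eq_mul]
  intro S sets _
  rw [pi_biInter_eval μs S sets]
  refine Finset.prod_congr rfl fun i hi => ?_
  have := pi_biInter_eval μs {i} (fun _ => sets i)
  simpa using this.symm

end PiLemmas

lemma cdf_bounds (sX sW : ℕ → ℝ) (hsX : ∀ i, 0 ≤ sX i) (hsW : ∀ i, 0 < sW i)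
    (k : ℕ) (hk : 1 ≤ k) {δ : ℝ} (hδ : 0 < δ) (Bk : ℝ)
    (hB : ∀ i : ℕ, varT (sX (i+1)) (sW (i+1)) ≤ Bk)
    (mval : ℝ)
    (hm : mval = (1/(k:ℝ)) * ∑ j ∈ Finset.range k, muT (sX (j+1)) (sW (j+1))) (α : ℝ) :
    (α + δ ≤ mval → infoDensCDF sX sW k α ≤ Bk / (k * δ^2)) ∧
    (mval + δ ≤ α → 1 - Bk / (k * δ^2) ≤ infoDensCDF sX sW k α) := by
  classical
  have hkR : (0:ℝ) < k := by exact_mod_cast hk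
  have hBnn : 0 ≤ Bk := le_trans (variance_nonneg _ _) (hB 0)
  set ν : Measure (Fin k → ℝ × ℝ) :=
    Measure.pi (fun i : Fin k => m2meas (sX ((i:ℕ)+1)) (sW ((i:ℕ)+1))) with hν
  haveI : IsProbabilityMeasure ν := by rw [hν]; infer_instance
  set G : Fin k → (Fin k → ℝ × ℝ) → ℝ :=
    fun i ω => Tfun (sX ((i:ℕ)+1)) (sW ((i:ℕ)+1)) (ω i) with hGdef
  set S : (Fin k → ℝ × ℝ) → ℝ := fun ω => (1/(k:ℝ)) * ∑ i : Fin k, G i ω with hSdef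
  have hG_meas : ∀ i, Measurable (G i) :=
    fun i => (measurable_T _ _).comp (measurable_pi_apply i)
  have hS_meas : Measurable S :=
    (Finset.measurable_sum Finset.univ fun i _ => hG_meas i).const_mul _
  have hsetS : ∀ α' : ℝ, MeasurableSet {ω | S ω < α'} :=
    fun α' => measurableSet_lt hS_meas measurable_const
  have hlaw : ∀ i : Fin k, ν.map (fun ω : Fin k → ℝ × ℝ => ω i)
      = m2meas (sX ((i:ℕ)+1)) (sW ((i:ℕ)+1)) := fun i => pi_map_eval _ i
  have hGL : ∀ i : Fin k, MemLp (G i) 2 ν := by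
    intro i
    have h1 : MemLp (Tfun (sX ((i:ℕ)+1)) (sW ((i:ℕ)+1))) 2
        (ν.map (fun ω : Fin k → ℝ × ℝ => ω i)) := by
      rw [hlaw i]; exact memLp_T (hsX _) (hsW _)
    exact (memLp_map_measure_iff (measurable_T _ _).aestronglyMeasurable
      (measurable_pi_apply i).aemeasurable).1 h1
  have hpush : ∀ (i : Fin k) (f : ℝ × ℝ → ℝ), Measurable f →
      ∫ ω, f (ω i) ∂ν = ∫ q, f q ∂(m2meas (sX ((i:ℕ)+1)) (sW ((i:ℕ)+1))) := by
    intro i f hf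
    rw [← hlaw i]
    exact (integral_map (measurable_pi_apply i).aemeasurable
      hf.aestronglyMeasurable).symm
  have hEG : ∀ i : Fin k, ∫ ω, G i ω ∂ν = muT (sX ((i:ℕ)+1)) (sW ((i:ℕ)+1)) :=
    fun i => hpush i _ (measurable_T _ _)
  have hES : ∫ ω, S ω ∂ν = mval := by
    rw [hm]
    simp only [hSdef]
    rw [integral_const_mul, integral_finset_sum Finset.univ
      (fun i _ => (hGL i).integrable one_le_two)]
    congr 1
    rw [Finset.sum_congr rfl fun i _ => hEG i,
      Fin.sum_univ_eq_sum_range (fun j => muT (sX (j+1)) (sW (j+1))) k]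
  have hindep : iIndepFun G ν := by
    have := (iIndepFun_eval (fun i : Fin k => m2meas (sX ((i:ℕ)+1)) (sW ((i:ℕ)+1)))).comp
      (fun i => Tfun (sX ((i:ℕ)+1)) (sW ((i:ℕ)+1))) (fun i => measurable_T _ _)
    exact this
  have hVG : ∀ i : Fin k, variance (G i) ν = varT (sX ((i:ℕ)+1)) (sW ((i:ℕ)+1)) := by
    intro i
    rw [variance_eq_sub (hGL i), varT, variance_eq_sub (memLp_T (hsX _) (hsW _))]
    have e1 : ∫ ω, ((G i) ^ 2) ω ∂ν
        = ∫ q, ((Tfun (sX ((i:ℕ)+1)) (sW ((i:ℕ)+1))) ^ 2) q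
            ∂(m2meas (sX ((i:ℕ)+1)) (sW ((i:ℕ)+1))) := by
      simp only [Pi.pow_apply]
      exact hpush i (fun q => (Tfun _ _ q) ^ 2) ((measurable_T _ _).pow_const 2)
    rw [e1, hEG i, muT]
  have hVS : variance S ν ≤ Bk / k := by
    have hsum_eq : (fun ω => ∑ i : Fin k, G i ω) = ∑ i : Fin k, G i := by
      funext ω; simp
    have h1 : variance S ν = (1/(k:ℝ))^2 * variance (fun ω => ∑ i : Fin k, G i ω) ν :=
      variance_const_mul _ _ _
    rw [h1, hsum_eq, IndepFun.variance_sum (fun i _ => hGL i)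
      (fun i _ j _ hij => hindep.indepFun hij)]
    have h2 : ∑ i : Fin k, variance (G i) ν ≤ k * Bk := by
      rw [Finset.sum_congr rfl fun i _ => hVG i]
      calc ∑ i : Fin k, varT (sX ((i:ℕ)+1)) (sW ((i:ℕ)+1))
          ≤ ∑ _i : Fin k, Bk := Finset.sum_le_sum fun i _ => hB _
        _ = k * Bk := by simp [mul_comm]
    calc (1/(k:ℝ))^2 * ∑ i : Fin k, variance (G i) ν
        ≤ (1/(k:ℝ))^2 * (k * Bk) := by
          exact mul_le_mul_of_nonneg_left h2 (by positivity)
      _ = Bk / k := by field_simp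
  have hSL : MemLp S 2 ν := by
    have h1 : MemLp (∑ i : Fin k, G i) 2 ν := memLp_finset_sum' _ (fun i _ => hGL i)
    refine (h1.const_mul (1/(k:ℝ))).ae_eq (ae_of_all _ fun ω => ?_)
    simp [hSdef]
  have hcheb : ν {ω | δ ≤ |S ω - ∫ x, S x ∂ν|}
      ≤ ENNReal.ofReal (variance S ν / δ^2) := meas_ge_le_variance_div_sq hSL hδ
  have hchebB : ν {ω | δ ≤ |S ω - mval|} ≤ ENNReal.ofReal (Bk / (k * δ^2)) := by
    rw [hES] at hcheb
    refine hcheb.trans (ENNReal.ofReal_le_ofReal ?_)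
    rw [show Bk / ((k:ℝ) * δ^2) = (Bk / k) / δ^2 by rw [div_div]]
    gcongr
  -- identification of the CDF
  have hMP : MeasurePreserving (MeasurableEquiv.arrowProdEquivProdArrow ℝ ℝ (Fin k)) ν
      (inputNoiseMeasure sX sW k) :=
    measurePreserving_arrowProdEquivProdArrow ℝ ℝ (Fin k)
      (fun i => gaussianReal 0 (sX ((i:ℕ)+1)).toNNReal)
      (fun i => gaussianReal 0 (sW ((i:ℕ)+1)).toNNReal)
  have hIDR : Measurable (fun xw : (Fin k → ℝ) × (Fin k → ℝ) =>
      infoDensRate sX sW k xw.1 xw.2) := by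
    simp only [infoDensRate]
    refine Measurable.const_mul ?_ _
    refine Finset.measurable_sum Finset.univ fun i _ => ?_
    show Measurable (fun xw : (Fin k → ℝ) × (Fin k → ℝ) =>
      Tfun (sX ((i:ℕ)+1)) (sW ((i:ℕ)+1)) (xw.1 i, xw.2 i))
    exact (measurable_T _ _).comp
      (by fun_prop : Measurable fun xw : (Fin k → ℝ) × (Fin k → ℝ) => (xw.1 i, xw.2 i))
  have hCDF : ∀ α' : ℝ, infoDensCDF sX sW k α' = (ν {ω | S ω < α'}).toReal := by
    intro α'
    rw [infoDensCDF, ← hMP.map_eq, Measure.map_apply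
      (MeasurableEquiv.arrowProdEquivProdArrow ℝ ℝ (Fin k)).measurable
      (measurableSet_lt hIDR measurable_const)]
    rfl
  constructor
  · intro hα
    have hsub : {ω | S ω < α} ⊆ {ω | δ ≤ |S ω - mval|} := by
      intro ω hω
      simp only [Set.mem_setOf_eq] at hω ⊢
      have : δ ≤ -(S ω - mval) := by linarith
      exact this.trans (neg_le_abs _)
    have h1 : ν {ω | S ω < α} ≤ ENNReal.ofReal (Bk / (k * δ^2)) :=
      (measure_mono hsub).trans hchebB
    rw [hCDF α]
    exact ENNReal.toReal_le_of_le_ofReal (by positivity) h1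
  · intro hα
    have hsub : {ω | S ω < α}ᶜ ⊆ {ω | δ ≤ |S ω - mval|} := by
      intro ω hω
      simp only [Set.mem_compl_iff, Set.mem_setOf_eq, not_lt] at hω
      simp only [Set.mem_setOf_eq]
      have : δ ≤ S ω - mval := by linarith
      exact this.trans (le_abs_self _)
    have h1 : ν {ω | S ω < α}ᶜ ≤ ENNReal.ofReal (Bk / (k * δ^2)) :=
      (measure_mono hsub).trans hchebB
    have h1' : (ν {ω | S ω < α}ᶜ).toReal ≤ Bk / (k * δ^2) :=
      ENNReal.toReal_le_of_le_ofReal (by positivity) h1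
    have hadd : (ν {ω | S ω < α}).toReal + (ν {ω | S ω < α}ᶜ).toReal = 1 := by
      rw [← ENNReal.toReal_add (measure_ne_top _ _) (measure_ne_top _ _),
        measure_add_measure_compl (hsetS α), measure_univ, ENNReal.toReal_one]
    rw [hCDF α]
    linarith

lemma periodic_add_mul {f : ℕ → ℝ} {N : ℕ} (hf : ∀ j, f (j + N) = f j) (j q : ℕ) :
    f (j + q * N) = f j := by
  induction q with
  | zero => simp
  | succ q ih => rw [Nat.succ_mul, ← Nat.add_assoc, hf, ih]

lemma sum_range_mul_periodic {f : ℕ → ℝ} {N : ℕ} (hf : ∀ j, f (j + N) = f j) (q : ℕ) :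
    ∑ j ∈ range (q * N), f j = q * ∑ j ∈ range N, f j := by
  induction q with
  | zero => simp
  | succ q ih =>
    rw [Nat.succ_mul, Finset.sum_range_add, ih]
    have : ∀ i, f (q * N + i) = f i := by
      intro i; rw [Nat.add_comm, periodic_add_mul hf]
    rw [Finset.sum_congr rfl (fun i _ => this i)]
    push_cast; ring

lemma cesaro_periodic {f : ℕ → ℝ} {N : ℕ} (hN : 0 < N) (hf : ∀ j, f (j + N) = f j) :
    Tendsto (fun k : ℕ => (1 / (k : ℝ)) * ∑ j ∈ range k, f j) atTop
      (nhds ((1 / (N : ℝ)) * ∑ j ∈ range N, f j)) := by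
  set S := ∑ j ∈ range N, f j with hS
  set B := ∑ j ∈ range N, |f j| with hB
  have hNR : (0:ℝ) < N := by exact_mod_cast hN
  have key : ∀ k : ℕ, 1 ≤ k →
      |(1 / (k : ℝ)) * ∑ j ∈ range k, f j - (1 / (N : ℝ)) * S| ≤ (|S| + B) / k := by
    intro k hk
    have hkR : (0:ℝ) < k := by exact_mod_cast hk
    obtain ⟨q, r, hrN, hkqr⟩ : ∃ q r, r < N ∧ k = q * N + r :=
      ⟨k / N, k % N, Nat.mod_lt _ hN, by rw [Nat.mul_comm]; exact (Nat.div_add_mod k N).symm⟩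
    have hsum : ∑ j ∈ range k, f j = q * S + ∑ j ∈ range r, f j := by
      rw [hkqr, Finset.sum_range_add, sum_range_mul_periodic hf]
      congr 1
      refine Finset.sum_congr rfl fun i _ => ?_
      rw [Nat.add_comm, periodic_add_mul hf]
    set R := ∑ j ∈ range r, f j with hR
    have hRB : |R| ≤ B := by
      calc |R| ≤ ∑ j ∈ range r, |f j| := Finset.abs_sum_le_sum_abs _ _
        _ ≤ B := Finset.sum_le_sum_of_subset_of_nonneg
            (Finset.range_subset_range.2 hrN.le) (fun _ _ _ => abs_nonneg _)
    have hkr : (k:ℝ) = q * N + r := by rw [hkqr]; push_cast; ring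
    have hiden : (1 / (k : ℝ)) * ∑ j ∈ range k, f j - (1 / (N : ℝ)) * S
        = ((N:ℝ) * R - r * S) / (k * N) := by
      rw [hsum]
      field_simp
      rw [hkr]; ring
    rw [hiden]
    rw [abs_div, abs_of_pos (by positivity : (0:ℝ) < (k:ℝ) * N)]
    rw [div_le_div_iff₀ (by positivity) hkR]
    have h1 : |(N:ℝ) * R - r * S| ≤ N * B + N * |S| := by
      calc |(N:ℝ) * R - r * S| ≤ |(N:ℝ) * R| + |(r:ℝ) * S| := abs_sub _ _
        _ = N * |R| + r * |S| := by
            rw [abs_mul, abs_mul, abs_of_nonneg (by positivity : (0:ℝ) ≤ (N:ℝ)),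
              abs_of_nonneg (by positivity : (0:ℝ) ≤ (r:ℝ))]
        _ ≤ N * B + N * |S| := by
            have : (r:ℝ) ≤ N := by exact_mod_cast hrN.le
            have := abs_nonneg S
            nlinarith [abs_nonneg R, hRB]
    nlinarith [mul_le_mul_of_nonneg_right h1 hkR.le]
  have htend : Tendsto (fun k : ℕ => (|S| + B) / k) atTop (nhds 0) :=
    tendsto_const_div_atTop_nhds_zero_nat _
  have := squeeze_zero_norm' (f := fun k : ℕ =>
      (1 / (k : ℝ)) * ∑ j ∈ range k, f j - (1 / (N : ℝ)) * S) ?_ htend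
  · have h2 := this.add_const ((1 / (N : ℝ)) * S)
    simpa using h2
  · filter_upwards [eventually_ge_atTop 1] with k hk
    simpa [Real.norm_eq_abs] using key k hk

lemma infoDensCDF_nonneg (sX sW : ℕ → ℝ) (k : ℕ) (α : ℝ) : 0 ≤ infoDensCDF sX sW k α :=
  ENNReal.toReal_nonneg

lemma infoDensCDF_le_one (sX sW : ℕ → ℝ) (k : ℕ) (α : ℝ) : infoDensCDF sX sW k α ≤ 1 := by
  haveI : IsProbabilityMeasure (inputNoiseMeasure sX sW k) := by
    unfold inputNoiseMeasure; infer_instance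
  have h : (inputNoiseMeasure sX sW k) {xw | infoDensRate sX sW k xw.1 xw.2 < α} ≤ 1 :=
    prob_le_one
  exact ENNReal.toReal_le_of_le_ofReal one_pos.le (by simpa using h)

lemma main_aux (sX sW : ℕ → ℝ) (hsX : ∀ i, 0 ≤ sX i) (hsW : ∀ i, 0 < sW i)
    (N : ℕ) (hN : 0 < N) (hperX : ∀ j, sX (j + N) = sX j) (hperW : ∀ j, sW (j + N) = sW j) :
    ∀ φ : ℕ → ℕ, StrictMono φ → ∃ c : ℝ,
      (∀ α < c, Tendsto (fun l => infoDensCDF sX sW (φ l) α) atTop (nhds 0)) ∧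
      (∀ α > c, Tendsto (fun l => infoDensCDF sX sW (φ l) α) atTop (nhds 1)) := by
  intro φ hφ
  set f : ℕ → ℝ := fun j => muT (sX (j+1)) (sW (j+1)) with hf
  have hfper : ∀ j, f (j + N) = f j := by
    intro j; simp only [hf]
    rw [show j + N + 1 = (j+1) + N by ring, hperX, hperW]
  set c : ℝ := (1/(N:ℝ)) * ∑ j ∈ Finset.range N, f j with hc
  have hm : Tendsto (fun k : ℕ => (1/(k:ℝ)) * ∑ j ∈ Finset.range k, f j) atTop (nhds c) :=
    cesaro_periodic hN hfper
  set m : ℕ → ℝ := fun k => (1/(k:ℝ)) * ∑ j ∈ Finset.range k, f j with hmdef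
  set g : ℕ → ℝ := fun j => varT (sX (j+1)) (sW (j+1)) with hg
  have hgper : Function.Periodic g N := by
    intro j; simp only [hg]
    rw [show j + N + 1 = (j+1) + N by ring, hperX, hperW]
  set B : ℝ := ∑ r ∈ Finset.range N, |g r| with hB
  have hgB : ∀ j, g j ≤ B := by
    intro j
    rw [← hgper.map_mod_nat j]
    calc g (j % N) ≤ |g (j % N)| := le_abs_self _
      _ ≤ B := Finset.single_le_sum (f := fun r => |g r|) (fun r _ => abs_nonneg _)
            (Finset.mem_range.2 (Nat.mod_lt _ hN))
  have hφtend : Tendsto φ atTop atTop := hφ.tendsto_atTop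
  have hφge : ∀ l : ℕ, l ≤ φ l := fun l => hφ.le_apply
  refine ⟨c, ?_, ?_⟩
  · intro α hα
    set δ : ℝ := (c - α)/2 with hδdef
    have hδ : 0 < δ := by rw [hδdef]; linarith
    have hev : ∀ᶠ k in atTop, α + δ ≤ m k := by
      have h1 : ∀ᶠ x in nhds c, α + δ < x := eventually_gt_nhds (by rw [hδdef]; linarith)
      exact (hm.eventually h1).mono fun k hk => hk.le
    have hub : ∀ᶠ l in atTop, infoDensCDF sX sW (φ l) α ≤ (B/δ^2) / l := by
      filter_upwards [hφtend.eventually hev, eventually_ge_atTop 1] with l h1 h2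
      have hk1 : 1 ≤ φ l := le_trans h2 (hφge l)
      have hbd := (cdf_bounds sX sW hsX hsW (φ l) hk1 hδ B (fun i => hgB i)
        (m (φ l)) rfl α).1 h1
      refine hbd.trans ?_
      have hBnn : 0 ≤ B := Finset.sum_nonneg fun r _ => abs_nonneg _
      rw [show B / ((φ l : ℝ) * δ^2) = (B/δ^2) / (φ l : ℝ) by
        rw [div_div, mul_comm]]
      have hl : (0:ℝ) < l := by exact_mod_cast h2
      have : ((l:ℝ)) ≤ ((φ l : ℕ) : ℝ) := by exact_mod_cast hφge l
      gcongr
    refine squeeze_zero' (Filter.Eventually.of_forall fun l => infoDensCDF_nonneg _ _ _ _)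
      hub ?_
    exact tendsto_const_div_atTop_nhds_zero_nat _
  · intro α hα
    set δ : ℝ := (α - c)/2 with hδdef
    have hδ : 0 < δ := by rw [hδdef]; linarith
    have hev : ∀ᶠ k in atTop, m k + δ ≤ α := by
      have h1 : ∀ᶠ x in nhds c, x < α - δ := eventually_lt_nhds (by rw [hδdef]; linarith)
      exact (hm.eventually h1).mono fun k hk => by linarith
    have hlb : ∀ᶠ l in atTop, 1 - (B/δ^2) / l ≤ infoDensCDF sX sW (φ l) α := by
      filter_upwards [hφtend.eventually hev, eventually_ge_atTop 1] with l h1 h2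
      have hk1 : 1 ≤ φ l := le_trans h2 (hφge l)
      have hbd := (cdf_bounds sX sW hsX hsW (φ l) hk1 hδ B (fun i => hgB i)
        (m (φ l)) rfl α).2 h1
      refine le_trans ?_ hbd
      have hBnn : 0 ≤ B := Finset.sum_nonneg fun r _ => abs_nonneg _
      have hl : (0:ℝ) < l := by exact_mod_cast h2
      have hle : ((l:ℝ)) ≤ ((φ l : ℕ) : ℝ) := by exact_mod_cast hφge l
      have : B / ((φ l : ℝ) * δ^2) ≤ (B/δ^2) / (l:ℝ) := by
        rw [show B / ((φ l : ℝ) * δ^2) = (B/δ^2) / (φ l : ℝ) by rw [div_div, mul_comm]]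
        gcongr
      linarith
    have htop : Tendsto (fun l : ℕ => 1 - (B/δ^2) / l) atTop (nhds 1) := by
      have := (tendsto_const_div_atTop_nhds_zero_nat (B/δ^2)).const_sub 1
      simpa using this
    refine tendsto_of_tendsto_of_tendsto_of_le_of_le' htop tendsto_const_nhds hlb ?_
    exact Filter.Eventually.of_forall fun l => infoDensCDF_le_one _ _ _ _

end AuxiliaryLemmas

/-- Fix `n` and consider the synchronously sampled noise
`σ_n²[i] = C(i·T_c/(p+ε_n))` (`ε_n = ⌊n·ε⌋/n`), periodic with period `N_n = p·n + ⌊n·ε⌋`.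
Let the input be the capacity-achieving one: the memoryless zero-mean Gaussian input with
water-filling variances `σ_{X_n}²[i] = (Δ − σ_n²[i])⁺`, `Δ` solving the water-filling equation
for power `P`.  Then every subsequence (in the blocklength `k`) of the mutual information
density rates `Z'_{k,n}` converges in distribution, as `k → ∞`, to a finite deterministic
scalar `c` (i.e. the CDFs tend to `0` below `c` and to `1` above `c`). -/
theorem stmt12 (C : ℝ → ℝ) (T_c : ℝ) (hT : 0 < T_c)
    (hC_cont : Continuous C) (hC_pos : ∀ t, 0 < C t)
    (hC_per : ∀ t, C (t + T_c) = C t)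
    (p : ℕ) (hp : 0 < p) (ε : ℝ) (hε0 : 0 < ε) (hε1 : ε < 1) (hirr : Irrational ε)
    (P : ℝ) (hP : 0 < P) (n : ℕ) (hn : 0 < n)
    (σ2 : ℕ → ℝ)
    (hσ2 : ∀ i : ℕ, σ2 i = C ((i : ℝ) * T_c / ((p : ℝ) + (⌊(n : ℝ) * ε⌋ : ℝ) / (n : ℝ))))
    (N : ℕ) (hN : N = p * n + (⌊(n : ℝ) * ε⌋).toNat)
    (Δ : ℝ) (hΔpos : 0 < Δ)
    (hΔ : (1 / (N : ℝ)) * ∑ i ∈ Finset.range N, max (Δ - σ2 i) 0 = P)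
    (sX : ℕ → ℝ) (hsX : ∀ i, sX i = max (Δ - σ2 i) 0) :
    ∀ φ : ℕ → ℕ, StrictMono φ → ∃ c : ℝ,
      (∀ α < c, Tendsto (fun l => infoDensCDF sX σ2 (φ l) α) atTop (nhds 0)) ∧
      (∀ α > c, Tendsto (fun l => infoDensCDF sX σ2 (φ l) α) atTop (nhds 1)) := by
  have hsW : ∀ i, 0 < σ2 i := fun i => by rw [hσ2 i]; exact hC_pos _
  have hsX0 : ∀ i, 0 ≤ sX i := fun i => by rw [hsX i]; exact le_max_right _ _
  have hNpos : 0 < N := by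
    rw [hN]; exact Nat.lt_of_lt_of_le (Nat.mul_pos hp hn) (Nat.le_add_right _ _)
  have hnR : (0:ℝ) < n := by exact_mod_cast hn
  have hpR : (0:ℝ) < (p:ℝ) := by exact_mod_cast hp
  have hflnn : (0:ℤ) ≤ ⌊(n:ℝ) * ε⌋ := Int.floor_nonneg.2 (by positivity)
  have hflR : (0:ℝ) ≤ ((⌊(n:ℝ) * ε⌋ : ℤ) : ℝ) := by exact_mod_cast hflnn
  set q : ℝ := (p:ℝ) + ((⌊(n:ℝ) * ε⌋ : ℤ) : ℝ)/(n:ℝ) with hq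
  have hqpos : 0 < q := by rw [hq]; positivity
  have hNR : (N:ℝ) = q * n := by
    have hcast : ((⌊(n:ℝ) * ε⌋.toNat : ℕ) : ℝ) = ((⌊(n:ℝ) * ε⌋ : ℤ) : ℝ) := by
      exact_mod_cast Int.toNat_of_nonneg hflnn
    rw [hN]
    push_cast
    rw [hcast, hq]
    field_simp
  have hper : Function.Periodic C T_c := hC_per
  have hσper : ∀ j, σ2 (j + N) = σ2 j := by
    intro j
    rw [hσ2, hσ2]
    have harg : (((j + N : ℕ)):ℝ) * T_c / q = (j:ℝ) * T_c / q + (n:ℝ) * T_c := by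
      push_cast
      rw [hNR]
      field_simp
    rw [harg]
    exact (hper.nat_mul n) _
  have hsXper : ∀ j, sX (j + N) = sX j := by
    intro j; rw [hsX, hsX, hσper]
  exact main_aux sX σ2 hsX0 hsW N hNpos hsXper hσper
end
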